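/- Let h be a real univariate polynomial of degree at most 2 satisfying |h(ε)| ≤ max(1, ε²) for all ε ∈ ℝ. Then |h'(1)| ≤ 1 + √2, and this bound is attained by h(x) = (1/2 + 1/(2√2))(x² − 1) + x/√2. -/

import Mathlib

open Polynomial

theorem K2_eq_one_add_sqrt_two :
    (∀ h : Polynomial ℝ, h.natDegree ≤ 2 → (∀ ε : ℝ, |h.eval ε| ≤ max 1 (ε ^ 2)) →
      |h.derivative.eval 1| ≤ 1 + Real.sqrt 2) ∧
    (let h₀ : Polynomial ℝ :=
      C (1 / 2 + 1 / (2 * Real.sqrt 2)) * (X ^ 2 - 1) + C (1 / Real.sqrt 2) * X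
     h₀.natDegree ≤ 2 ∧ (∀ ε : ℝ, |h₀.eval ε| ≤ max 1 (ε ^ 2)) ∧
      h₀.derivative.eval 1 = 1 + Real.sqrt 2) := by
  have hs2 : Real.sqrt 2 ^ 2 = 2 := Real.sq_sqrt (by norm_num)
  have hs1 : 1 ≤ Real.sqrt 2 := by nlinarith [Real.sqrt_nonneg 2]
  have hs3 : Real.sqrt 2 ≤ 3 / 2 := by nlinarith [Real.sqrt_nonneg 2]
  set s := Real.sqrt 2 with hsdef
  have hs0 : 0 < s := by linarith
  have hinv : (1 : ℝ) / s = s / 2 := by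
    rw [div_eq_div_iff hs0.ne' (by norm_num : (2:ℝ) ≠ 0)]; nlinarith
  constructor
  · intro h hd hb
    have h1 := hb (1 + s)
    have h2 := hb (1 - s)
    have e1 : max (1:ℝ) ((1+s)^2) = (1+s)^2 := max_eq_right (by nlinarith)
    have e2 : max (1:ℝ) ((1-s)^2) = 1 := max_eq_left (by nlinarith)
    rw [e1] at h1; rw [e2] at h2
    have hd3 : h.natDegree < 3 := by omega
    have ev : ∀ x : ℝ, h.eval x = h.coeff 0 + h.coeff 1 * x + h.coeff 2 * x^2 := by
      intro x
      rw [Polynomial.eval_eq_sum_range' hd3]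
      simp [Finset.sum_range_succ]
    have hdD : h.derivative.natDegree < 2 := by
      have := Polynomial.natDegree_derivative_le h
      omega
    have evD : h.derivative.eval 1 = h.coeff 1 + 2 * h.coeff 2 := by
      rw [Polynomial.eval_eq_sum_range' hdD]
      simp [Finset.sum_range_succ, Polynomial.coeff_derivative]
      ring
    rw [ev] at h1 h2
    rw [evD]
    rw [abs_le] at h1 h2 ⊢
    constructor <;> nlinarith [h1.1, h1.2, h2.1, h2.2]
  · intro h₀
    refine ⟨?_, ?_, ?_⟩
    · have : h₀ = C (1 / 2 + 1 / (2 * s)) * (X ^ 2 - 1) + C (1 / s) * X := rfl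
      rw [this]
      compute_degree
    · intro ε
      have ev : h₀.eval ε = (1/2 + s/4) * (ε^2 - 1) + (s/2) * ε := by
        show ((C (1 / 2 + 1 / (2 * s)) * (X ^ 2 - 1) + C (1 / s) * X) : Polynomial ℝ).eval ε = _
        have h1 : (1:ℝ) / (2 * s) = s / 4 := by
          rw [div_eq_div_iff (by positivity : (2*s:ℝ) ≠ 0) (by norm_num : (4:ℝ) ≠ 0)]; nlinarith
        simp [h1, hinv]
      rw [ev]
      rcases le_or_gt (ε^2) 1 with hε | hε
      · rw [max_eq_left hε, abs_le]
        constructor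
        · nlinarith [sq_nonneg (ε + s - 1), sq_nonneg (ε - 1), sq_nonneg (ε + 1)]
        · nlinarith [sq_nonneg (ε - 1), sq_nonneg (ε + 1)]
      · rw [max_eq_right hε.le, abs_le]
        constructor
        · nlinarith [sq_nonneg (ε + 1), sq_nonneg (ε - 1)]
        · nlinarith [sq_nonneg (ε - s - 1)]
    · have hder : h₀.derivative = C (2 * (1 / 2 + 1 / (2 * s))) * X + C (1 / s) := by
        show Polynomial.derivative ((C (1 / 2 + 1 / (2 * s)) * (X ^ 2 - 1) + C (1 / s) * X) : Polynomial ℝ) = _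
        simp [Polynomial.derivative_mul]
        rw [show (C 2 : Polynomial ℝ) = 2 from map_ofNat C 2]
        ring
      rw [hder]
      simp [hinv]
      have hi : s⁻¹ = s / 2 := by rw [← one_div, hinv]
      rw [hi]
      ring
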